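/- arXiv:2605.12210 — 4 statements merged into one kernel-verified Lean document; each statement's English description precedes it below -/
import Mathlib

section
/- For every quaternion matrix H ∈ ℍ^{n×n} and every vector q ∈ ℍ^n, the real part of the quaternion quadratic form equals the real quadratic form of Λ(H): Re(q* H q) = x(q)ᵀ Λ(H) x(q), where q* H q = Σ_{k,l} conj(q_k) H_{kl} q_l. -/
open Matrix

/-- The real `4n × 4n` block matrix `Λ(H)` associated with a quaternion matrix `H`,
indexed by `Fin 4 × Fin n` with block order `R, I, J, K`. -/
noncomputable def lambdaMat {n : ℕ} (H : Matrix (Fin n) (Fin n) (Quaternion ℝ)) :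
    Matrix (Fin 4 × Fin n) (Fin 4 × Fin n) ℝ := fun p q =>
  ![![(H p.2 q.2).re, -(H p.2 q.2).imI, -(H p.2 q.2).imJ, -(H p.2 q.2).imK],
    ![(H p.2 q.2).imI, (H p.2 q.2).re, -(H p.2 q.2).imK, (H p.2 q.2).imJ],
    ![(H p.2 q.2).imJ, (H p.2 q.2).imK, (H p.2 q.2).re, -(H p.2 q.2).imI],
    ![(H p.2 q.2).imK, -(H p.2 q.2).imJ, (H p.2 q.2).imI, (H p.2 q.2).re]] p.1 q.1

/-- The stacked real vector `x(q) = (q_R, q_I, q_J, q_K)` of a quaternion vector `q`. -/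
noncomputable def xvec {n : ℕ} (q : Fin n → Quaternion ℝ) : Fin 4 × Fin n → ℝ := fun p =>
  ![(q p.2).re, (q p.2).imI, (q p.2).imJ, (q p.2).imK] p.1

lemma sum_re' {α : Type*} (s : Finset α) (f : α → Quaternion ℝ) :
    (∑ i ∈ s, f i).re = ∑ i ∈ s, (f i).re := by
  induction s using Finset.cons_induction with
  | empty => simp; rfl
  | cons a s ha ih => simp [Finset.sum_cons, ih]

/-- For every quaternion matrix `H` and quaternion vector `q`,
`Re(q* H q) = x(q)ᵀ Λ(H) x(q)`. -/
theorem real_part_quadratic_form_eq_lambda {n : ℕ}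
    (H : Matrix (Fin n) (Fin n) (Quaternion ℝ)) (q : Fin n → Quaternion ℝ) :
    (∑ k, ∑ l, star (q k) * H k l * q l).re =
      xvec q ⬝ᵥ (lambdaMat H).mulVec (xvec q) := by
  rw [sum_re']
  simp only [dotProduct, mulVec, Fintype.sum_prod_type, lambdaMat, xvec,
    Fin.sum_univ_four, Finset.mul_sum, Matrix.cons_val_zero, Matrix.cons_val_one,
    Matrix.head_cons, Matrix.cons_val_two, Matrix.tail_cons, Matrix.cons_val_three,
    ← Finset.sum_add_distrib]
  refine Finset.sum_congr rfl fun k _ => ?_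
  rw [sum_re']
  refine Finset.sum_congr rfl fun l _ => ?_
  simp [Quaternion.re_mul, Quaternion.imI_mul, Quaternion.imJ_mul, Quaternion.imK_mul]
  ring
end

section
/- Let H ∈ ℍ^{n×n} be a Hermitian quaternion matrix. Then H is quaternion-PSD (i.e., Re(v* H v) ≥ 0 for all v ∈ ℍ^n) if and only if the real matrix Λ(H) is positive semidefinite. -/
open Matrix

/-- `i`-th real component of a quaternion. -/
def compFun (i : Fin 4) (a : Quaternion ℝ) : ℝ := ![a.re, a.imI, a.imJ, a.imK] i

lemma key_pointwise {n : ℕ} (H : Matrix (Fin n) (Fin n) (Quaternion ℝ))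
    (a c : Quaternion ℝ) (k l : Fin n) :
    (star a * H k l * c).re =
      ∑ i : Fin 4, ∑ j : Fin 4,
        compFun i a * lambdaMat H (i, k) (j, l) * compFun j c := by
  simp only [Fin.sum_univ_four, compFun, lambdaMat]
  simp [Quaternion.re_mul, Quaternion.imI_mul, Quaternion.imJ_mul, Quaternion.imK_mul]
  ring

lemma my_re_sum {α : Type*} (s : Finset α) (f : α → Quaternion ℝ) :
    (∑ a ∈ s, f a).re = ∑ a ∈ s, (f a).re :=
  map_sum (QuaternionAlgebra.reₗ (-1 : ℝ) 0 (-1)) f s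

lemma sum_swap4 {α β : Type*} [Fintype α] [Fintype β] (f : α → β → α → β → ℝ) :
    (∑ i, ∑ k, ∑ j, ∑ l, f i k j l) = ∑ k, ∑ l, ∑ i, ∑ j, f i k j l :=
  calc (∑ i, ∑ k, ∑ j, ∑ l, f i k j l)
      = ∑ k, ∑ i, ∑ j, ∑ l, f i k j l := Finset.sum_comm
    _ = ∑ k, ∑ i, ∑ l, ∑ j, f i k j l :=
        Finset.sum_congr rfl fun k _ => Finset.sum_congr rfl fun i _ => Finset.sum_comm
    _ = ∑ k, ∑ l, ∑ i, ∑ j, f i k j l :=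
        Finset.sum_congr rfl fun k _ => Finset.sum_comm

lemma key_sum {n : ℕ} (H : Matrix (Fin n) (Fin n) (Quaternion ℝ))
    (v : Fin n → Quaternion ℝ) :
    (∑ k, ∑ l, star (v k) * H k l * v l).re =
      ∑ p : Fin 4 × Fin n, ∑ q : Fin 4 × Fin n,
        compFun p.1 (v p.2) * lambdaMat H p q * compFun q.1 (v q.2) := by
  simp only [my_re_sum, Fintype.sum_prod_type]
  rw [sum_swap4 (fun i k j l =>
    compFun i (v k) * lambdaMat H (i, k) (j, l) * compFun j (v l))]
  exact Finset.sum_congr rfl fun k _ => Finset.sum_congr rfl fun l _ =>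
    key_pointwise H (v k) (v l) k l

/-- A Hermitian quaternion matrix `H` is quaternion-PSD iff `Λ(H)` is positive
semidefinite. -/
theorem quaternion_psd_iff_lambda_posSemidef {n : ℕ}
    (H : Matrix (Fin n) (Fin n) (Quaternion ℝ)) (hH : H = Hᴴ) :
    (∀ v : Fin n → Quaternion ℝ, 0 ≤ (∑ k, ∑ l, star (v k) * H k l * v l).re) ↔
      (lambdaMat H).PosSemidef := by
  have hsym : (lambdaMat H).IsHermitian := by
    ext ⟨i, k⟩ ⟨j, l⟩
    have h : H k l = star (H l k) := by
      conv_lhs => rw [hH]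
      rfl
    simp only [conjTranspose_apply, star_trivial, lambdaMat, h]
    fin_cases i <;> fin_cases j <;>
      simp [Quaternion.re_star, Quaternion.imI_star, Quaternion.imJ_star, Quaternion.imK_star]
  have quad : ∀ x : Fin 4 × Fin n → ℝ,
      star x ⬝ᵥ (lambdaMat H).mulVec x =
        ∑ p : Fin 4 × Fin n, ∑ q, x p * lambdaMat H p q * x q := by
    intro x
    simp only [star_trivial, dotProduct, mulVec, dotProduct, Finset.mul_sum]
    exact Finset.sum_congr rfl fun p _ => Finset.sum_congr rfl fun q _ => by ring
  constructor
  · intro hq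
    refine posSemidef_iff_dotProduct_mulVec.2 ⟨hsym, fun x => ?_⟩
    rw [quad x]
    set v : Fin n → Quaternion ℝ := fun k => ⟨x (0, k), x (1, k), x (2, k), x (3, k)⟩ with hv
    have hx : ∀ p : Fin 4 × Fin n, x p = compFun p.1 (v p.2) := by
      rintro ⟨i, k⟩
      fin_cases i <;> rfl
    calc (0:ℝ) ≤ (∑ k, ∑ l, star (v k) * H k l * v l).re := hq v
      _ = _ := by
          rw [key_sum]
          exact Finset.sum_congr rfl fun p _ => Finset.sum_congr rfl fun q _ => by
            rw [hx p, hx q]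
  · intro hpsd v
    rw [key_sum]
    have := (posSemidef_iff_dotProduct_mulVec.1 hpsd).2 (fun p => compFun p.1 (v p.2))
    rwa [quad] at this
end

section
/- Let X be a real symmetric positive semidefinite 4n×4n matrix, viewed in 4×4 block form with n×n blocks X_{(a,b)} for block indices a,b ∈ {0,1,2,3}. Define the real n×n matrices R_X = X_{(0,0)} + X_{(1,1)} + X_{(2,2)} + X_{(3,3)}, I_X = X_{(1,0)} − X_{(0,1)} + X_{(3,2)} − X_{(2,3)}, J_X = X_{(2,0)} − X_{(0,2)} − X_{(3,1)} + X_{(1,3)}, K_X = X_{(3,0)} − X_{(0,3)} + X_{(2,1)} − X_{(1,2)}. Then the quaternion matrix H_X := R_X + I_X·i + J_X·j + K_X·k is Hermitian and quaternion-PSD (Re(v* H_X v) ≥ 0 for all v ∈ ℍ^n). -/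
open Matrix

/-- The quaternion matrix `H_X = R_X + I_X·i + J_X·j + K_X·k` built from the
`4 × 4` block structure of a real `4n × 4n` matrix `X`. -/
noncomputable def quatOfBlocks {n : ℕ}
    (X : Matrix (Fin 4 × Fin n) (Fin 4 × Fin n) ℝ) :
    Matrix (Fin n) (Fin n) (Quaternion ℝ) := fun k l =>
  ⟨X (0, k) (0, l) + X (1, k) (1, l) + X (2, k) (2, l) + X (3, k) (3, l),
   X (1, k) (0, l) - X (0, k) (1, l) + X (3, k) (2, l) - X (2, k) (3, l),
   X (2, k) (0, l) - X (0, k) (2, l) - X (3, k) (1, l) + X (1, k) (3, l),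
   X (3, k) (0, l) - X (0, k) (3, l) + X (2, k) (1, l) - X (1, k) (2, l)⟩

theorem quatOfBlocks_re {n : ℕ} (X : Matrix (Fin 4 × Fin n) (Fin 4 × Fin n) ℝ) (k l : Fin n) :
    (quatOfBlocks X k l).re =
      X (0, k) (0, l) + X (1, k) (1, l) + X (2, k) (2, l) + X (3, k) (3, l) := rfl

theorem quatOfBlocks_imI {n : ℕ} (X : Matrix (Fin 4 × Fin n) (Fin 4 × Fin n) ℝ) (k l : Fin n) :
    (quatOfBlocks X k l).imI =
      X (1, k) (0, l) - X (0, k) (1, l) + X (3, k) (2, l) - X (2, k) (3, l) := rfl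

theorem quatOfBlocks_imJ {n : ℕ} (X : Matrix (Fin 4 × Fin n) (Fin 4 × Fin n) ℝ) (k l : Fin n) :
    (quatOfBlocks X k l).imJ =
      X (2, k) (0, l) - X (0, k) (2, l) - X (3, k) (1, l) + X (1, k) (3, l) := rfl

theorem quatOfBlocks_imK {n : ℕ} (X : Matrix (Fin 4 × Fin n) (Fin 4 × Fin n) ℝ) (k l : Fin n) :
    (quatOfBlocks X k l).imK =
      X (3, k) (0, l) - X (0, k) (3, l) + X (2, k) (1, l) - X (1, k) (2, l) := rfl

/-- If `X` is a real symmetric positive semidefinite `4n × 4n` matrix, then the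
quaternion matrix `H_X` is Hermitian and quaternion-PSD. -/
theorem quatOfBlocks_hermitian_psd {n : ℕ}
    (X : Matrix (Fin 4 × Fin n) (Fin 4 × Fin n) ℝ) (hX : X.PosSemidef) :
    quatOfBlocks X = (quatOfBlocks X)ᴴ ∧
      ∀ v : Fin n → Quaternion ℝ,
        0 ≤ (∑ k, ∑ l, star (v k) * quatOfBlocks X k l * v l).re := by
  have hsymm : ∀ α β, X α β = X β α := fun α β => by
    conv_lhs => rw [← hX.1]
    simp [conjTranspose_apply]
  constructor
  · ext k l <;>
      simp only [conjTranspose_apply, quatOfBlocks_re, quatOfBlocks_imI, quatOfBlocks_imJ,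
        quatOfBlocks_imK, Quaternion.re_star,
        Quaternion.imI_star, Quaternion.imJ_star, Quaternion.imK_star] <;>
      rw [hsymm (0,k), hsymm (1,k), hsymm (2,k), hsymm (3,k)] <;> ring
  · intro v
    set y : Fin 4 → (Fin 4 × Fin n) → ℝ := fun c p =>
      ![![(v p.2).re, -(v p.2).imI, -(v p.2).imJ, -(v p.2).imK],
        ![(v p.2).imI, (v p.2).re, -(v p.2).imK, (v p.2).imJ],
        ![(v p.2).imJ, (v p.2).imK, (v p.2).re, -(v p.2).imI],
        ![(v p.2).imK, -(v p.2).imJ, (v p.2).imI, (v p.2).re]] p.1 c with hy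
    have key : ∀ k l, (star (v k) * quatOfBlocks X k l * v l).re
        = ∑ c : Fin 4, ∑ a : Fin 4, ∑ b : Fin 4,
            y c (a, k) * X (a, k) (b, l) * y c (b, l) := by
      intro k l
      simp only [hy, quatOfBlocks_re, quatOfBlocks_imI, quatOfBlocks_imJ, quatOfBlocks_imK,
        Fin.sum_univ_four, Quaternion.re_mul, Quaternion.imI_mul,
        Quaternion.imJ_mul, Quaternion.imK_mul, Quaternion.re_star, Quaternion.imI_star,
        Quaternion.imJ_star, Quaternion.imK_star,
        Matrix.cons_val_zero, Matrix.cons_val_one, Matrix.head_cons, Matrix.cons_val_two,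
        Matrix.tail_cons, Matrix.cons_val_three, Matrix.head_fin_const]
      ring
    have hre : (∑ k, ∑ l, star (v k) * quatOfBlocks X k l * v l).re
        = ∑ k, ∑ l, (star (v k) * quatOfBlocks X k l * v l).re := by
      have h1 : ∀ (s : Finset (Fin n)) (f : Fin n → Quaternion ℝ),
          (∑ i ∈ s, f i).re = ∑ i ∈ s, (f i).re := fun s f =>
        map_sum (QuaternionAlgebra.reₗ (-1 : ℝ) 0 (-1)) f s
      rw [h1]
      exact Finset.sum_congr rfl fun k _ => h1 _ _
    rw [hre]
    have goal2 : ∑ k, ∑ l, (star (v k) * quatOfBlocks X k l * v l).re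
        = ∑ c : Fin 4, star (y c) ⬝ᵥ X *ᵥ y c := by
      simp only [key]
      set t : Fin n → Fin n → Fin 4 → Fin 4 → Fin 4 → ℝ := fun k l c a b =>
        y c (a, k) * X (a, k) (b, l) * y c (b, l) with ht
      calc ∑ k, ∑ l, ∑ c, ∑ a, ∑ b, t k l c a b
          = ∑ k, ∑ c, ∑ l, ∑ a, ∑ b, t k l c a b :=
            Finset.sum_congr rfl fun k _ => Finset.sum_comm
        _ = ∑ c, ∑ k, ∑ l, ∑ a, ∑ b, t k l c a b := Finset.sum_comm
        _ = ∑ c, ∑ k, ∑ a, ∑ l, ∑ b, t k l c a b :=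
            Finset.sum_congr rfl fun c _ => Finset.sum_congr rfl fun k _ => Finset.sum_comm
        _ = ∑ c, ∑ a, ∑ k, ∑ l, ∑ b, t k l c a b :=
            Finset.sum_congr rfl fun c _ => Finset.sum_comm
        _ = ∑ c, ∑ a, ∑ k, ∑ b, ∑ l, t k l c a b :=
            Finset.sum_congr rfl fun c _ => Finset.sum_congr rfl fun a _ =>
              Finset.sum_congr rfl fun k _ => Finset.sum_comm
        _ = ∑ c : Fin 4, star (y c) ⬝ᵥ X *ᵥ y c := by
            simp only [dotProduct, mulVec, star_trivial, Fintype.sum_prod_type,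
              Finset.mul_sum, ht]
            exact Finset.sum_congr rfl fun c _ => Finset.sum_congr rfl fun a _ =>
              Finset.sum_congr rfl fun k _ => Finset.sum_congr rfl fun b _ =>
                Finset.sum_congr rfl fun l _ => by ring
    rw [goal2]
    exact Finset.sum_nonneg fun c _ => hX.dotProduct_mulVec_nonneg (y c)
end

section
/- A Hermitian quaternion matrix G ∈ ℍ^{n×n} is quaternion-PSD (Re(v* G v) ≥ 0 for all v ∈ ℍ^n) if and only if there exists a quaternion matrix C ∈ ℍ^{n×n} such that G = C* C. -/
open Matrix Quaternion

local notation "Q" => Quaternion ℝ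

private lemma re_sum {α : Type*} (s : Finset α) (f : α → Q) :
    (∑ i ∈ s, f i).re = ∑ i ∈ s, (f i).re :=
  map_sum (AddMonoidHom.mk' (fun q : Q => q.re) (fun _ _ => rfl)) f s

private lemma rev_lemma {n : ℕ} (C : Matrix (Fin n) (Fin n) Q) (v : Fin n → Q) :
    (∑ k, ∑ l, star (v k) * (Cᴴ * C) k l * v l)
      = ∑ i, star (∑ k, C i k * v k) * (∑ l, C i l * v l) := by
  simp only [Matrix.mul_apply, conjTranspose_apply, Finset.sum_mul, Finset.mul_sum, star_sum,
    StarMul.star_mul, mul_assoc]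
  exact (Finset.sum_congr rfl fun k _ => Finset.sum_comm).trans
    (Finset.sum_comm.trans (Finset.sum_congr rfl fun i _ => Finset.sum_comm))

private lemma qf_cons {n : ℕ} (G : Matrix (Fin (n+1)) (Fin (n+1)) Q) (q : Q) (w : Fin n → Q) :
    (∑ k, ∑ l, star ((Fin.cons q w : Fin (n+1) → Q) k) * G k l * (Fin.cons q w : Fin (n+1) → Q) l)
      = star q * G 0 0 * q + star q * (∑ l, G 0 l.succ * w l)
        + (∑ k, star (w k) * G k.succ 0) * q
        + ∑ k, ∑ l, star (w k) * G k.succ l.succ * w l := by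
  simp only [Fin.sum_univ_succ, Fin.cons_zero, Fin.cons_succ, Finset.sum_add_distrib,
    Finset.mul_sum, Finset.sum_mul, mul_assoc]
  abel

set_option maxHeartbeats 1000000 in
private lemma gram_exists : ∀ (n : ℕ) (G : Matrix (Fin n) (Fin n) Q), G = Gᴴ →
    (∀ v : Fin n → Q, 0 ≤ (∑ k, ∑ l, star (v k) * G k l * v l).re) →
    ∃ C : Matrix (Fin n) (Fin n) Q, G = Cᴴ * C := by
  intro n
  induction n with
  | zero => exact fun G _ _ => ⟨0, by ext i j <;> exact i.elim0⟩
  | succ n ih =>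
    intro G hG hpos
    have hGsym : ∀ k l, G l k = star (G k l) := fun k l => by
      conv_lhs => rw [hG]
      simp [conjTranspose_apply]
    have hdiag : G 0 0 = ((G 0 0).re : Q) := by
      have h := hGsym 0 0
      have h1 : (G 0 0).imI = 0 := by
        have := congrArg QuaternionAlgebra.imI h; simp [Quaternion.imI_star] at this; linarith
      have h2 : (G 0 0).imJ = 0 := by
        have := congrArg QuaternionAlgebra.imJ h; simp [Quaternion.imJ_star] at this; linarith
      have h3 : (G 0 0).imK = 0 := by
        have := congrArg QuaternionAlgebra.imK h; simp [Quaternion.imK_star] at this; linarith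
      apply Quaternion.ext <;>
        simp [h1, h2, h3, Quaternion.re_coe, Quaternion.imI_coe, Quaternion.imJ_coe,
          Quaternion.imK_coe]
    set a : ℝ := (G 0 0).re with ha_def
    have ha0 : 0 ≤ a := by
      have h := hpos (Fin.cons 1 0)
      rw [qf_cons] at h
      simpa using h
    rcases eq_or_lt_of_le ha0 with ha | ha
    · -- a = 0 : first row and column vanish
      have hG00 : G 0 0 = 0 := by rw [hdiag, ← ha]; simp
      have hb : ∀ j : Fin n, G 0 j.succ = 0 := by
        intro j
        by_contra hbj
        have hns : 0 < normSq (G 0 j.succ) := by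
          rcases lt_or_eq_of_le (normSq_nonneg (a := G 0 j.succ)) with h | h
          · exact h
          · exact absurd (normSq_eq_zero.mp h.symm) hbj
        set N : ℝ := normSq (G 0 j.succ) with hN
        set r : ℝ := (G j.succ j.succ).re with hr
        set c : ℝ := (r + 1) / (2 * N) with hc
        have hkey := hpos (Fin.cons (((-c : ℝ) : Q) * G 0 j.succ) (Pi.single j 1))
        rw [qf_cons] at hkey
        have h1 : ∑ l, G 0 l.succ * (Pi.single j 1 : Fin n → Q) l = G 0 j.succ := by
          simp [Pi.single_apply, mul_ite]
        have h2 : ∑ k, star ((Pi.single j 1 : Fin n → Q) k) * G k.succ 0 = G j.succ 0 := by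
          simp [Pi.single_apply, apply_ite (star : Q → Q), ite_mul]
        have h3 : ∑ k, ∑ l, star ((Pi.single j 1 : Fin n → Q) k) * G k.succ l.succ
            * (Pi.single j 1 : Fin n → Q) l = G j.succ j.succ := by
          simp [Pi.single_apply, apply_ite (star : Q → Q), ite_mul, mul_ite]
        rw [h1, h2, h3, hG00] at hkey
        have e1 : star (((-c : ℝ) : Q) * G 0 j.succ) * G 0 j.succ = ((-c * N : ℝ) : Q) := by
          rw [StarMul.star_mul, Quaternion.star_coe, ← Quaternion.coe_commutes, mul_assoc,
            Quaternion.star_mul_self, ← hN, ← Quaternion.coe_mul]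
        have e2 : G j.succ 0 * (((-c : ℝ) : Q) * G 0 j.succ) = ((-c * N : ℝ) : Q) := by
          rw [hGsym 0 j.succ, Quaternion.coe_mul_eq_smul, mul_smul_comm,
            Quaternion.star_mul_self, ← hN, Quaternion.coe_mul, Quaternion.coe_mul_eq_smul]
        rw [e1, e2] at hkey
        simp only [mul_zero, zero_mul, Quaternion.re_add, Quaternion.re_coe,
          Quaternion.re_zero, zero_add] at hkey
        have hc2 : c * (2 * N) = r + 1 := by
          rw [hc, div_mul_cancel₀]; exact (mul_pos two_pos hns).ne'
        nlinarith
      have hDsym : (Matrix.of fun k l : Fin n => G k.succ l.succ) =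
          (Matrix.of fun k l : Fin n => G k.succ l.succ)ᴴ := by
        refine Matrix.ext fun k l => ?_
        simpa [conjTranspose_apply] using hGsym l.succ k.succ
      have hDpos : ∀ w : Fin n → Q,
          0 ≤ (∑ k, ∑ l,
            star (w k) * (Matrix.of fun k l : Fin n => G k.succ l.succ) k l * w l).re := by
        intro w
        have h := hpos (Fin.cons 0 w)
        rw [qf_cons] at h
        simpa using h
      obtain ⟨C₁, hC₁⟩ := ih _ hDsym hDpos
      refine ⟨Matrix.of (Fin.cases (fun _ => 0) fun i' => Fin.cons 0 (C₁ i')), ?_⟩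
      refine Matrix.ext fun k l => ?_
      rw [Matrix.mul_apply]
      simp only [conjTranspose_apply, Matrix.of_apply]
      rw [Fin.sum_univ_succ]
      rcases Fin.eq_zero_or_eq_succ k with rfl | ⟨k', rfl⟩ <;>
        rcases Fin.eq_zero_or_eq_succ l with rfl | ⟨l', rfl⟩
      · simp [hG00]
      · simp [hb]
      · simp [hGsym 0 k'.succ, hb]
      · have h5 : G k'.succ l'.succ = ∑ i, star (C₁ i k') * C₁ i l' := by
          have h6 := congrFun (congrFun hC₁ k') l'
          rw [Matrix.mul_apply] at h6
          simpa [conjTranspose_apply] using h6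
        simp [h5]
    · -- 0 < a
      have hane : a ≠ 0 := ne_of_gt ha
      set s : ℝ := Real.sqrt a with hs_def
      have hs : s * s = a := Real.mul_self_sqrt ha0
      have hsne : s ≠ 0 := ne_of_gt (Real.sqrt_pos.mpr ha)
      set S : Matrix (Fin n) (Fin n) Q :=
        Matrix.of (fun k l : Fin n =>
          G k.succ l.succ - a⁻¹ • (star (G 0 k.succ) * G 0 l.succ)) with hS_def
      have hSsym : S = Sᴴ := by
        refine Matrix.ext fun k l => ?_
        simp [hS_def, conjTranspose_apply, star_sub, Quaternion.star_smul, StarMul.star_mul, star_star,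
          mul_assoc, ← hGsym l.succ k.succ]
      have hSpos : ∀ w : Fin n → Q, 0 ≤ (∑ k, ∑ l, star (w k) * S k l * w l).re := by
        intro w
        have hq := hpos (Fin.cons ((-a⁻¹) • (∑ l, G 0 l.succ * w l)) w)
        rw [qf_cons, hdiag] at hq
        set t : Q := ∑ l, G 0 l.succ * w l with ht
        have hstart : ∑ k, star (w k) * G k.succ 0 = star t := by
          rw [ht, star_sum]
          refine Finset.sum_congr rfl fun l _ => ?_
          rw [StarMul.star_mul, ← hGsym 0 l.succ]
        rw [hstart] at hq
        have e3 : star ((-a⁻¹) • t) * ((a : ℝ) : Q) * ((-a⁻¹) • t) + star ((-a⁻¹) • t) * t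
            + star t * ((-a⁻¹) • t) = -(a⁻¹ • (star t * t)) := by
          simp only [Quaternion.star_smul, smul_mul_assoc, Quaternion.mul_coe_eq_smul,
            mul_smul_comm, smul_smul, ← add_smul, ← neg_smul]
          congr 1
          field_simp
          ring
        rw [e3] at hq
        have hqfS : (∑ k, ∑ l, star (w k) * S k l * w l)
            = -(a⁻¹ • (star t * t)) + ∑ k, ∑ l, star (w k) * G k.succ l.succ * w l := by
          have h7 : ∑ k, ∑ l, a⁻¹ • (star (w k) * (star (G 0 k.succ) * G 0 l.succ) * w l)
              = a⁻¹ • (star t * t) := by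
            simp only [← Finset.smul_sum]
            congr 1
            rw [ht, star_sum, Finset.sum_mul_sum]
            refine Finset.sum_congr rfl fun k _ => Finset.sum_congr rfl fun l _ => ?_
            rw [StarMul.star_mul]
            simp [mul_assoc]
          calc (∑ k, ∑ l, star (w k) * S k l * w l)
              = ∑ k, ∑ l, (star (w k) * G k.succ l.succ * w l
                - a⁻¹ • (star (w k) * (star (G 0 k.succ) * G 0 l.succ) * w l)) := by
                refine Finset.sum_congr rfl fun k _ => Finset.sum_congr rfl fun l _ => ?_
                simp only [hS_def, Matrix.of_apply, mul_sub, sub_mul, smul_mul_assoc,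
                  mul_smul_comm]
            _ = (∑ k, ∑ l, star (w k) * G k.succ l.succ * w l)
                - ∑ k, ∑ l, a⁻¹ • (star (w k) * (star (G 0 k.succ) * G 0 l.succ) * w l) := by
                simp [Finset.sum_sub_distrib]
            _ = -(a⁻¹ • (star t * t)) + ∑ k, ∑ l, star (w k) * G k.succ l.succ * w l := by
                rw [h7]; abel
        rw [hqfS]
        exact hq
      obtain ⟨C₁, hC₁⟩ := ih S hSsym hSpos
      refine ⟨Matrix.of (Fin.cases (Fin.cons ((s : ℝ) : Q) fun j => (s⁻¹ : ℝ) • G 0 j.succ)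
        fun i' => Fin.cons 0 (C₁ i')), ?_⟩
      refine Matrix.ext fun k l => ?_
      rw [Matrix.mul_apply]
      simp only [conjTranspose_apply, Matrix.of_apply]
      rw [Fin.sum_univ_succ]
      rcases Fin.eq_zero_or_eq_succ k with rfl | ⟨k', rfl⟩ <;>
        rcases Fin.eq_zero_or_eq_succ l with rfl | ⟨l', rfl⟩
      · simp [hdiag, Quaternion.star_coe, ← Quaternion.coe_mul, hs]
      · simp [Quaternion.star_coe, Quaternion.coe_mul_eq_smul, smul_smul,
          mul_inv_cancel₀ hsne, inv_mul_cancel₀ hsne, mul_inv_cancel₀ hsne]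
      · simp [hGsym 0 k'.succ, Quaternion.star_smul, smul_mul_assoc, Quaternion.mul_coe_eq_smul,
          smul_smul, inv_mul_cancel₀ hsne, mul_inv_cancel₀ hsne]
      · have h5 : S k' l' = ∑ i, star (C₁ i k') * C₁ i l' := by
          rw [hC₁, Matrix.mul_apply]
          simp [conjTranspose_apply]
        have h8 : s⁻¹ * s⁻¹ = a⁻¹ := by rw [← hs, mul_inv]
        simp only [Fin.cases_zero, Fin.cases_succ, Fin.cons_zero, Fin.cons_succ]
        rw [← h5, hS_def]
        simp only [Matrix.of_apply, Quaternion.star_smul, smul_mul_assoc, mul_smul_comm,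
          smul_smul, h8]
        abel

/-- Gram-matrix characterization: a Hermitian quaternion matrix `G` is
quaternion-PSD iff `G = C* C` for some quaternion matrix `C`. -/
theorem quaternion_psd_iff_gram {n : ℕ}
    (G : Matrix (Fin n) (Fin n) (Quaternion ℝ)) (hG : G = Gᴴ) :
    (∀ v : Fin n → Quaternion ℝ, 0 ≤ (∑ k, ∑ l, star (v k) * G k l * v l).re) ↔
      ∃ C : Matrix (Fin n) (Fin n) (Quaternion ℝ), G = Cᴴ * C := by
  constructor
  · exact fun h => gram_exists n G hG h
  · rintro ⟨C, rfl⟩ v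
    rw [rev_lemma C v]
    simp only [Quaternion.star_mul_self]
    rw [re_sum]
    refine Finset.sum_nonneg fun i _ => ?_
    simpa [Quaternion.re_coe] using Quaternion.normSq_nonneg
end
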